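/- Let f be a Parikh-collinear morphism on a finite alphabet Σ ⊆ ℕ that is prolongable on a letter a (i.e., f(a) begins with a and |f(a)| ≥ 2), and let x be the fixed point of f starting with a. Set k = ∑_{b∈Σ} |f(b)|_b (the total number of occurrences of each letter b in its own image f(b)). Then the additive complexity ρ⁺_x is a k-automatic sequence; in particular, its k-kernel, the set of sequences {n ↦ ρ⁺_x(kᵉ·n + r) : e ≥ 0, 0 ≤ r < kᵉ}, is finite. -/

import Mathlib

/-- Sum of the letters of the length-`n` factor of `x` starting at position `i`. -/
def blockSum (x : ℕ → ℕ) (i n : ℕ) : ℕ := ∑ j ∈ Finset.range n, x (i + j)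

/-- Additive complexity: the number of distinct letter-sums of length-`n` factors. -/
noncomputable def addComplexity (x : ℕ → ℕ) (n : ℕ) : ℕ :=
  Set.ncard {s : ℕ | ∃ i : ℕ, blockSum x i n = s}

/-- Parikh vector of the length-`n` factor of `x` starting at position `i`. -/
def parikh (x : ℕ → ℕ) (i n : ℕ) : ℕ → ℕ :=
  fun a => ((Finset.range n).filter fun j => x (i + j) = a).card

/-- Abelian complexity: the number of distinct Parikh vectors of length-`n` factors. -/
noncomputable def abComplexity (x : ℕ → ℕ) (n : ℕ) : ℕ :=
  Set.ncard {P : ℕ → ℕ | ∃ i : ℕ, parikh x i n = P}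

/-- `x` is the fixed point of the morphism `f` starting with the letter `a₀`:
`x 0 = a₀` and `x` is the infinite concatenation `f (x 0) f (x 1) f (x 2) ⋯`. -/
def IsFixedPointOf (f : ℕ → List ℕ) (a₀ : ℕ) (x : ℕ → ℕ) : Prop :=
  x 0 = a₀ ∧ ∀ n j, j < (f (x n)).length →
    x ((∑ k ∈ Finset.range n, (f (x k)).length) + j) = (f (x n)).getD j 0


section AuxiliaryPC

open Finset


/-- generic list-count summation lemma -/
lemma list_count_sum {β : Type*} [AddCommMonoid β] (S : Finset ℕ) (g : ℕ → β) :
    ∀ (l : List ℕ), (∀ c ∈ l, c ∈ S) → (l.map g).sum = ∑ c ∈ S, l.count c • g c := by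
  intro l
  induction l with
  | nil => simp
  | cons a t ih =>
    intro h
    have ha : a ∈ S := h a List.mem_cons_self
    have ht : ∀ c ∈ t, c ∈ S := fun c hc => h c (List.mem_cons_of_mem _ hc)
    have key : ∀ c ∈ S, (a :: t).count c • g c
        = t.count c • g c + (if a = c then g c else 0) := by
      intro c _
      rw [List.count_cons, add_smul]
      congr 1
      by_cases hac : a = c <;> simp [hac]
    rw [List.map_cons, List.sum_cons, Finset.sum_congr rfl key, Finset.sum_add_distrib,
      Finset.sum_ite_eq S a g, if_pos ha, ih ht, add_comm]

lemma sum_range_getD {β : Type*} [AddCommMonoid β] (g : ℕ → β) :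
    ∀ (l : List ℕ), ∑ t ∈ Finset.range l.length, g (l.getD t 0) = (l.map g).sum := by
  intro l
  induction l with
  | nil => simp
  | cons a t ih =>
    rw [List.length_cons, Finset.sum_range_succ']
    simp only [List.getD_cons_succ, List.getD_cons_zero, ih, List.map_cons, List.sum_cons]
    rw [add_comm]


/-- If `ρ` factors through a finite-state function `st` compatible with
multiplication by `k` and adding remainders, then the `k`-kernel of `ρ` is finite. -/
lemma kernel_finite_of_state {F : Type} [Finite F] (k : ℕ) (hk : 1 ≤ k)
    (st : ℕ → F) (ρ : ℕ → ℕ)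
    (hdet : ∀ n n', st n = st n' → ρ n = ρ n')
    (hstep : ∀ r, r < k → ∀ n n', st n = st n' → st (k * n + r) = st (k * n' + r)) :
    Set.Finite {g : ℕ → ℕ | ∃ e r : ℕ, r < k ^ e ∧ g = fun n => ρ (k ^ e * n + r)} := by
  classical
  -- a value function
  set h : F → ℕ := fun σ => if hh : ∃ n, st n = σ then ρ hh.choose else 0 with hh_def
  have hρ : ∀ n, ρ n = h (st n) := by
    intro n
    have hex : ∃ m, st m = st n := ⟨n, rfl⟩
    simp only [hh_def, dif_pos hex]
    exact hdet n hex.choose hex.choose_spec.symm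
  -- single step transition functions
  have hstepT : ∀ r, r < k → ∃ T : F → F, ∀ n, st (k * n + r) = T (st n) := by
    intro r hr
    refine ⟨fun σ => if hh : ∃ n, st n = σ then st (k * hh.choose + r) else σ, fun n => ?_⟩
    have hex : ∃ m, st m = st n := ⟨n, rfl⟩
    simp only [dif_pos hex]
    exact hstep r hr _ _ hex.choose_spec.symm
  -- iterated transitions
  have hiter : ∀ e r, r < k ^ e → ∃ T : F → F, ∀ n, st (k ^ e * n + r) = T (st n) := by
    intro e
    induction e with
    | zero =>
      intro r hr
      have : r = 0 := by simpa using hr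
      subst this
      exact ⟨id, fun n => by simp⟩
    | succ e ih =>
      intro r hr
      have hke : 0 < k ^ e := Nat.pow_pos hk
      have hq : r / k ^ e < k := by
        rw [Nat.div_lt_iff_lt_mul hke]
        exact lt_of_lt_of_le hr (le_of_eq (pow_succ' k e))
      obtain ⟨T1, hT1⟩ := hstepT (r / k ^ e) hq
      obtain ⟨T2, hT2⟩ := ih (r % k ^ e) (Nat.mod_lt _ hke)
      refine ⟨T2 ∘ T1, fun n => ?_⟩
      have harith : k ^ (e+1) * n + r = k ^ e * (k * n + r / k ^ e) + r % k ^ e := by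
        conv_lhs => rw [← Nat.div_add_mod r (k ^ e)]
        ring
      rw [harith, hT2, Function.comp_apply, hT1]
  -- the kernel is contained in a finite image
  have : {g : ℕ → ℕ | ∃ e r : ℕ, r < k ^ e ∧ g = fun n => ρ (k ^ e * n + r)}
      ⊆ (fun T : F → F => fun n => h (T (st n))) '' Set.univ := by
    rintro g ⟨e, r, hr, rfl⟩
    obtain ⟨T, hT⟩ := hiter e r hr
    refine ⟨T, Set.mem_univ _, ?_⟩
    funext n
    show h (T (st n)) = ρ (k ^ e * n + r)
    rw [← hT, ← hρ]
  exact (Set.finite_univ.image _).subset this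


open Finset

lemma list_sum_map_one : ∀ (l : List ℕ), (l.map fun _ => (1:ℕ)).sum = l.length := by
  intro l; induction l with
  | nil => simp
  | cons a t ih => simp [ih]; omega

structure PC : Type where
  S : Finset ℕ
  f : ℕ → List ℕ
  a : ℕ
  x : ℕ → ℕ
  hclosed : ∀ b ∈ S, ∀ c ∈ f b, c ∈ S
  hcollinear : ∀ b ∈ S, ∀ b' ∈ S, ∃ p q : ℕ, ¬(p = 0 ∧ q = 0) ∧
      ∀ c ∈ S, p * (f b).count c = q * (f b').count c
  ha : a ∈ S
  hlen : 2 ≤ (f a).length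
  hx0 : x 0 = a
  hxs : ∀ n j, j < (f (x n)).length →
    x ((∑ k ∈ Finset.range n, (f (x k)).length) + j) = (f (x n)).getD j 0
  hk2 : 2 ≤ ∑ b ∈ S, (f b).count b

namespace PC

variable (P : PC)

def len (b : ℕ) : ℕ := (P.f b).length
def L (n : ℕ) : ℕ := ∑ j ∈ Finset.range n, P.len (P.x j)
def M : ℕ := P.len P.a
def A : ℕ := (P.f P.a).sum
def kk : ℕ := ∑ b ∈ P.S, (P.f b).count b

lemma two_le_M : 2 ≤ P.M := P.hlen
lemma two_le_kk : 2 ≤ P.kk := P.hk2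

lemma hxL : ∀ n j, j < P.len (P.x n) → P.x (P.L n + j) = (P.f (P.x n)).getD j 0 :=
  P.hxs

lemma L_zero : P.L 0 = 0 := by simp [L]

lemma L_succ (n : ℕ) : P.L (n + 1) = P.L n + P.len (P.x n) := by
  simp [L, Finset.sum_range_succ]

lemma L_mono : Monotone P.L := by
  intro m n h
  exact Finset.sum_le_sum_of_subset (Finset.range_subset_range.2 h)

lemma L_add (p t : ℕ) :
    P.L (p + t) = P.L p + ∑ u ∈ Finset.range t, P.len (P.x (p + u)) := by
  induction t with
  | zero => simp
  | succ t ih => rw [← Nat.add_assoc, L_succ, ih, Finset.sum_range_succ]; ring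

lemma getD_mem_S {b t : ℕ} (hb : b ∈ P.S) (ht : t < P.len b) :
    (P.f b).getD t 0 ∈ P.S := by
  rw [List.getD_eq_getElem _ _ ht]
  exact P.hclosed b hb _ (List.getElem_mem ht)

lemma len_eq_sum_count {b : ℕ} (hb : b ∈ P.S) :
    P.len b = ∑ c ∈ P.S, (P.f b).count c := by
  have h := list_count_sum P.S (fun _ => (1:ℕ)) (P.f b) (P.hclosed b hb)
  rw [list_sum_map_one] at h
  simpa [smul_eq_mul, len] using h

lemma list_sum_eq {b : ℕ} (hb : b ∈ P.S) :
    (P.f b).sum = ∑ c ∈ P.S, (P.f b).count c * c := by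
  have h := list_count_sum P.S (fun c => c) (P.f b) (P.hclosed b hb)
  simpa [smul_eq_mul] using h

/-- Key collinearity identity in ℕ. -/
lemma collin {b : ℕ} (hb : b ∈ P.S) :
    ∀ c ∈ P.S, P.M * (P.f b).count c = P.len b * (P.f P.a).count c := by
  obtain ⟨p, q, hpq, h⟩ := P.hcollinear b hb P.a P.ha
  have hp : p ≠ 0 := by
    rintro rfl
    have hq : q ≠ 0 := fun hq0 => hpq ⟨rfl, hq0⟩
    have hze : ∀ c ∈ P.S, (P.f P.a).count c = 0 := by
      intro c hc
      have := h c hc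
      simp only [Nat.zero_mul] at this
      exact (Nat.mul_eq_zero.1 this.symm).resolve_left hq
    have : P.M = 0 := by
      rw [M, len_eq_sum_count P P.ha]
      exact Finset.sum_eq_zero hze
    have := P.two_le_M
    omega
  have hlb : p * P.len b = q * P.M := by
    rw [len_eq_sum_count P hb, M, len_eq_sum_count P P.ha, Finset.mul_sum, Finset.mul_sum]
    exact Finset.sum_congr rfl (fun c hc => h c hc)
  intro c hc
  have key : p * (P.M * (P.f b).count c) = p * (P.len b * (P.f P.a).count c) := by
    calc p * (P.M * (P.f b).count c) = P.M * (p * (P.f b).count c) := by ring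
    _ = P.M * (q * (P.f P.a).count c) := by rw [h c hc]
    _ = (q * P.M) * (P.f P.a).count c := by ring
    _ = (p * P.len b) * (P.f P.a).count c := by rw [hlb]
    _ = p * (P.len b * (P.f P.a).count c) := by ring
  exact Nat.eq_of_mul_eq_mul_left (Nat.pos_of_ne_zero hp) key

lemma Msum {b : ℕ} (hb : b ∈ P.S) : P.M * (P.f b).sum = P.A * P.len b := by
  rw [list_sum_eq P hb, A, list_sum_eq P P.ha, Finset.mul_sum, Finset.sum_mul]
  refine Finset.sum_congr rfl (fun c hc => ?_)
  calc P.M * ((P.f b).count c * c) = (P.M * (P.f b).count c) * c := by ring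
  _ = (P.len b * (P.f P.a).count c) * c := by rw [collin P hb c hc]
  _ = (P.f P.a).count c * c * P.len b := by ring

lemma kkM : ∑ c ∈ P.S, (P.f P.a).count c * P.len c = P.kk * P.M := by
  rw [kk, Finset.sum_mul]
  refine Finset.sum_congr rfl (fun c hc => ?_)
  have := collin P hc c hc
  calc (P.f P.a).count c * P.len c = P.len c * (P.f P.a).count c := by ring
  _ = P.M * (P.f c).count c := (collin P hc c hc).symm
  _ = (P.f c).count c * P.M := by ring

lemma weight_sum {b : ℕ} (hb : b ∈ P.S) :
    ∑ t ∈ Finset.range (P.len b), P.len ((P.f b).getD t 0) = P.kk * P.len b := by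
  have h1 : ∑ t ∈ Finset.range (P.len b), P.len ((P.f b).getD t 0)
      = ∑ c ∈ P.S, (P.f b).count c * P.len c := by
    rw [len, sum_range_getD P.len (P.f b), list_count_sum P.S P.len (P.f b) (P.hclosed b hb)]
    simp [smul_eq_mul]
  have h2 : P.M * ∑ c ∈ P.S, (P.f b).count c * P.len c = P.M * (P.kk * P.len b) := by
    rw [Finset.mul_sum]
    calc ∑ c ∈ P.S, P.M * ((P.f b).count c * P.len c)
        = ∑ c ∈ P.S, P.len b * ((P.f P.a).count c * P.len c) := by
          refine Finset.sum_congr rfl (fun c hc => ?_)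
          calc P.M * ((P.f b).count c * P.len c) = (P.M * (P.f b).count c) * P.len c := by ring
          _ = (P.len b * (P.f P.a).count c) * P.len c := by rw [collin P hb c hc]
          _ = P.len b * ((P.f P.a).count c * P.len c) := by ring
    _ = P.len b * ∑ c ∈ P.S, (P.f P.a).count c * P.len c := by rw [Finset.mul_sum]
    _ = P.len b * (P.kk * P.M) := by rw [kkM]
    _ = P.M * (P.kk * P.len b) := by ring
  have hM : 0 < P.M := by have := P.two_le_M; omega
  rw [h1]
  exact Nat.eq_of_mul_eq_mul_left hM h2

/-- within-coverage there is a covering block with smaller index -/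
lemma cover_of_lt : ∀ {n i : ℕ}, i < P.L n → ∃ ν, ν < n ∧ P.L ν ≤ i ∧ i < P.L (ν + 1) := by
  intro n
  induction n with
  | zero => intro i hi; rw [L_zero] at hi; omega
  | succ n ih =>
    intro i hi
    by_cases h : i < P.L n
    · obtain ⟨ν, h1, h2, h3⟩ := ih h
      exact ⟨ν, by omega, h2, h3⟩
    · exact ⟨n, by omega, by omega, hi⟩

/-- second-level length identity (needs letters in S up to n) -/
lemma LL {n : ℕ} (h : ∀ j, j < n → P.x j ∈ P.S) : P.L (P.L n) = P.kk * P.L n := by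
  induction n with
  | zero => simp [L_zero]
  | succ n ih =>
    have hxn : P.x n ∈ P.S := h n (Nat.lt_succ_self n)
    have ihh := ih (fun j hj => h j (Nat.lt_succ_of_lt hj))
    rw [L_succ, L_add, ihh]
    have : ∑ u ∈ Finset.range (P.len (P.x n)), P.len (P.x (P.L n + u))
        = ∑ u ∈ Finset.range (P.len (P.x n)), P.len ((P.f (P.x n)).getD u 0) := by
      refine Finset.sum_congr rfl (fun u hu => ?_)
      rw [P.hxL n u (Finset.mem_range.1 hu)]
    rw [this, weight_sum P hxn, Nat.mul_add]

/-- Main structural induction: all letters lie in S and L m > m. -/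
lemma main_ind : ∀ m : ℕ, (∀ j, j < m → P.x j ∈ P.S) ∧ (1 ≤ m → m < P.L m) := by
  intro m
  induction m using Nat.strong_induction_on with
  | _ m IH =>
    match m with
    | 0 => exact ⟨fun j hj => absurd hj (Nat.not_lt_zero j), fun h => absurd h (by omega)⟩
    | (j+1) =>
      have h1 : ∀ i, i < j → P.x i ∈ P.S := (IH j (Nat.lt_succ_self j)).1
      have hxj : P.x j ∈ P.S := by
        rcases Nat.eq_zero_or_pos j with rfl | hj0
        · rw [P.hx0]; exact P.ha
        · have hjL : j < P.L j := (IH j (Nat.lt_succ_self j)).2 hj0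
          obtain ⟨ν, hν, hν1, hν2⟩ := P.cover_of_lt hjL
          have hτ : j - P.L ν < P.len (P.x ν) := by
            have := P.L_succ ν; omega
          have := P.hxL ν (j - P.L ν) hτ
          rw [show P.L ν + (j - P.L ν) = j by omega] at this
          rw [this]
          exact P.getD_mem_S (h1 ν hν) hτ
      have h2 : ∀ i, i < j + 1 → P.x i ∈ P.S := by
        intro i hi
        rcases Nat.lt_or_ge i j with h | h
        · exact h1 i h
        · have : i = j := by omega
          rw [this]; exact hxj
      refine ⟨h2, fun _ => ?_⟩
      rcases Nat.eq_zero_or_pos j with rfl | hj0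
      · show 1 < P.L 1
        have : P.L 1 = P.M := by
          rw [show (1:ℕ) = 0 + 1 from rfl, L_succ, L_zero, P.hx0]
          simp [M]
        have := P.two_le_M
        omega
      · have hjL : j < P.L j := (IH j (Nat.lt_succ_self j)).2 hj0
        have hstep : P.L (j+1) = P.L j + P.len (P.x j) := P.L_succ j
        by_contra hcon
        push_neg at hcon
        have heq : P.L (j+1) = j + 1 := by omega
        have := P.LL h2
        rw [heq] at this
        have hk := P.two_le_kk
        nlinarith [this, hk]

lemma xS (j : ℕ) : P.x j ∈ P.S := (P.main_ind (j+1)).1 j (Nat.lt_succ_self j)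

lemma lt_L {m : ℕ} (h : 1 ≤ m) : m < P.L m := (P.main_ind m).2 h

lemma LL' (n : ℕ) : P.L (P.L n) = P.kk * P.L n := P.LL (fun j _ => P.xS j)

lemma cover (i : ℕ) : ∃ m, P.L m ≤ i ∧ i < P.L (m+1) := by
  have h : i < P.L (i+1) := by
    have := P.lt_L (show 1 ≤ i + 1 by omega)
    omega
  obtain ⟨ν, _, h2, h3⟩ := P.cover_of_lt h
  exact ⟨ν, h2, h3⟩

lemma cover_data (i : ℕ) : ∃ m t, t < P.len (P.x m) ∧ i = P.L m + t := by
  obtain ⟨m, h1, h2⟩ := P.cover i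
  refine ⟨m, i - P.L m, ?_, by omega⟩
  have := P.L_succ m
  omega

lemma cov_unique {m m' i : ℕ} (h1 : P.L m ≤ i) (h2 : i < P.L (m+1))
    (h1' : P.L m' ≤ i) (h2' : i < P.L (m'+1)) : m = m' := by
  rcases lt_trichotomy m m' with h | h | h
  · have : P.L (m+1) ≤ P.L m' := P.L_mono h
    omega
  · exact h
  · have : P.L (m'+1) ≤ P.L m := P.L_mono h
    omega

def Xs (i : ℕ) : ℕ := ∑ j ∈ Finset.range i, P.x j

lemma Xs_add (p t : ℕ) :
    P.Xs (p + t) = P.Xs p + ∑ u ∈ Finset.range t, P.x (p + u) := by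
  induction t with
  | zero => simp
  | succ t ih => rw [← Nat.add_assoc, Xs, Finset.sum_range_succ, ← Xs, ih,
      Finset.sum_range_succ]; ring

lemma Xs_L (m : ℕ) : P.M * P.Xs (P.L m) = P.A * P.L m := by
  induction m with
  | zero => simp [L_zero, Xs]
  | succ m ih =>
    rw [L_succ, Xs_add]
    have hsum : ∑ u ∈ Finset.range (P.len (P.x m)), P.x (P.L m + u)
        = (P.f (P.x m)).sum := by
      rw [show (P.f (P.x m)).sum = ((P.f (P.x m)).map (fun c => c)).sum by simp]
      rw [← sum_range_getD (fun c => c) (P.f (P.x m))]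
      exact Finset.sum_congr rfl (fun u hu => P.hxL m u (Finset.mem_range.1 hu))
    rw [hsum, Nat.mul_add, ih, Msum P (P.xS m), Nat.mul_add]

def sZ (i : ℕ) : ℤ := (P.M : ℤ) * P.Xs i - P.A * i

def phi (b t : ℕ) : ℤ :=
  (P.M : ℤ) * (∑ u ∈ Finset.range t, ((P.f b).getD u 0 : ℤ)) - P.A * t

lemma sZ_block {m t : ℕ} (ht : t ≤ P.len (P.x m)) :
    P.sZ (P.L m + t) = P.phi (P.x m) t := by
  have h1 : (P.M : ℤ) * (P.Xs (P.L m)) = P.A * P.L m := by exact_mod_cast P.Xs_L m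
  have hsum : ∑ u ∈ Finset.range t, (P.x (P.L m + u) : ℤ)
      = ∑ u ∈ Finset.range t, ((P.f (P.x m)).getD u 0 : ℤ) := by
    refine Finset.sum_congr rfl (fun u hu => ?_)
    rw [P.hxL m u (lt_of_lt_of_le (Finset.mem_range.1 hu) ht)]
  unfold sZ phi
  rw [Xs_add]
  push_cast
  rw [hsum]
  linear_combination h1

def al (c τ : ℕ) : ℕ := ∑ t ∈ Finset.range τ, P.len ((P.f c).getD t 0)

lemma al_full {b : ℕ} (hb : b ∈ P.S) : P.al b (P.len b) = P.kk * P.len b :=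
  P.weight_sum hb

lemma al_mono (c : ℕ) {τ τ' : ℕ} (h : τ ≤ τ') : P.al c τ ≤ P.al c τ' :=
  Finset.sum_le_sum_of_subset (Finset.range_subset_range.2 h)

lemma al_le {b : ℕ} (hb : b ∈ P.S) {τ : ℕ} (hτ : τ ≤ P.len b) :
    P.al b τ ≤ P.kk * P.len b :=
  le_trans (P.al_mono b hτ) (le_of_eq (P.al_full hb))

lemma al_step (c τ : ℕ) : P.al c (τ+1) = P.al c τ + P.len ((P.f c).getD τ 0) :=
  Finset.sum_range_succ _ _

lemma L_block (μ τ : ℕ) (hτ : τ ≤ P.len (P.x μ)) :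
    P.L (P.L μ + τ) = P.kk * P.L μ + P.al (P.x μ) τ := by
  rw [L_add, LL']
  congr 1
  refine Finset.sum_congr rfl (fun u hu => ?_)
  rw [P.hxL μ u (lt_of_lt_of_le (Finset.mem_range.1 hu) hτ)]

/-- occurrence of a pair of (nonempty-image) letters at given block-distance -/
def O (b b' W : ℕ) : Prop :=
  ∃ m m', m ≤ m' ∧ P.x m = b ∧ P.x m' = b' ∧ 1 ≤ P.len b ∧ 1 ≤ P.len b' ∧
    P.L m' = P.L m + W

def Ofn (b b' : ℕ) (w : ℤ) : Prop := ∃ W : ℕ, (W : ℤ) = w ∧ P.O b b' W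

/-- The desubstitution recursion for `O`. -/
lemma Orec (b b' W : ℕ) : P.O b b' W ↔
    ∃ c c' τ τ' V, c ∈ P.S ∧ c' ∈ P.S ∧ τ < P.len c ∧ τ' < P.len c' ∧
      (P.f c).getD τ 0 = b ∧ (P.f c').getD τ' 0 = b' ∧
      1 ≤ P.len b ∧ 1 ≤ P.len b' ∧ P.O c c' V ∧
      (W : ℤ) = P.kk * V + P.al c' τ' - P.al c τ := by
  constructor
  · rintro ⟨m, m', hmm', hxb, hxb', hlb, hlb', hLW⟩
    obtain ⟨μ, τ, hτ, hmeq⟩ := P.cover_data m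
    obtain ⟨μ', τ', hτ', hmeq'⟩ := P.cover_data m'
    have hgb : (P.f (P.x μ)).getD τ 0 = b := by
      rw [← hxb, hmeq]
      exact (P.hxL μ τ hτ).symm
    have hgb' : (P.f (P.x μ')).getD τ' 0 = b' := by
      rw [← hxb', hmeq']
      exact (P.hxL μ' τ' hτ').symm
    have hμμ' : μ ≤ μ' := by
      by_contra hcon
      push_neg at hcon
      have h1 : P.L (μ' + 1) ≤ P.L μ := P.L_mono hcon
      have h2 : m' < P.L (μ' + 1) := by
        have := P.L_succ μ'
        omega
      omega
    have e1 : P.L m = P.kk * P.L μ + P.al (P.x μ) τ := by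
      rw [hmeq]; exact P.L_block μ τ (le_of_lt hτ)
    have e2 : P.L m' = P.kk * P.L μ' + P.al (P.x μ') τ' := by
      rw [hmeq']; exact P.L_block μ' τ' (le_of_lt hτ')
    have hLmono : P.L μ ≤ P.L μ' := P.L_mono hμμ'
    refine ⟨P.x μ, P.x μ', τ, τ', P.L μ' - P.L μ, P.xS μ, P.xS μ', hτ, hτ', hgb, hgb',
      hlb, hlb', ⟨μ, μ', hμμ', rfl, rfl, by omega, by omega, by omega⟩, ?_⟩
    have hcast : ((P.L μ' - P.L μ : ℕ) : ℤ) = (P.L μ' : ℤ) - P.L μ := by omega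
    rw [hcast]
    have e1' : (P.L m : ℤ) = P.kk * P.L μ + P.al (P.x μ) τ := by exact_mod_cast e1
    have e2' : (P.L m' : ℤ) = P.kk * P.L μ' + P.al (P.x μ') τ' := by exact_mod_cast e2
    have hLW' : (P.L m' : ℤ) = P.L m + W := by exact_mod_cast hLW
    linear_combination e2' - e1' - hLW'
  · rintro ⟨c, c', τ, τ', V, hc, hc', hτ, hτ', hgb, hgb', hlb, hlb',
      ⟨μ, μ', hμμ', hxc, hxc', hlc, hlc', hLV⟩, hWeq⟩
    set m := P.L μ + τ with hm
    set m' := P.L μ' + τ' with hm'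
    have hτx : τ < P.len (P.x μ) := by rw [hxc]; exact hτ
    have hτ'x : τ' < P.len (P.x μ') := by rw [hxc']; exact hτ'
    have hxm : P.x m = b := by
      rw [hm, P.hxL μ τ hτx, hxc, hgb]
    have hxm' : P.x m' = b' := by
      rw [hm', P.hxL μ' τ' hτ'x, hxc', hgb']
    have e1 : P.L m = P.kk * P.L μ + P.al c τ := by
      rw [hm, P.L_block μ τ (le_of_lt hτx), hxc]
    have e2 : P.L m' = P.kk * P.L μ' + P.al c' τ' := by
      rw [hm', P.L_block μ' τ' (le_of_lt hτ'x), hxc']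
    have hLm' : P.L m' = P.L m + W := by
      have e1' : (P.L m : ℤ) = P.kk * P.L μ + P.al c τ := by exact_mod_cast e1
      have e2' : (P.L m' : ℤ) = P.kk * P.L μ' + P.al c' τ' := by exact_mod_cast e2
      have hLV' : (P.L μ' : ℤ) = P.L μ + V := by exact_mod_cast hLV
      have : (P.L m' : ℤ) = P.L m + W := by linear_combination e2' - e1' + P.kk * hLV' - hWeq
      exact_mod_cast this
    have hmm' : m ≤ m' := by
      rcases Nat.lt_or_ge μ μ' with h | h
      · have h1 : P.L (μ + 1) ≤ P.L μ' := P.L_mono h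
        have h2 := P.L_succ μ
        omega
      · have hμeq : μ = μ' := le_antisymm hμμ' h
        subst hμeq
        have hV0 : V = 0 := by omega
        have hcc' : c = c' := by rw [← hxc, ← hxc']
        subst hV0
        subst hcc'
        by_contra hcon
        push_neg at hcon
        have hττ' : τ' < τ := by omega
        have hstep : P.al c (τ' + 1) = P.al c τ' + P.len b' := by
          rw [P.al_step, hgb']
        have hmono : P.al c (τ' + 1) ≤ P.al c τ := P.al_mono c hττ'
        have hW0 : (0 : ℤ) ≤ (W : ℤ) := by positivity
        rw [hWeq] at hW0
        simp only [Nat.cast_zero, mul_zero, zero_add] at hW0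
        omega
    exact ⟨m, m', hmm', hxm, hxm', hlb, hlb', hLm'⟩

def Dset (n : ℕ) : Set ℤ := {d | ∃ i, P.sZ (i + n) - P.sZ i = d}

lemma sZ_diff (i n : ℕ) :
    P.sZ (i + n) - P.sZ i = (P.M : ℤ) * blockSum P.x i n - P.A * n := by
  unfold sZ
  rw [Xs_add]
  have : (blockSum P.x i n : ℤ) = ∑ u ∈ Finset.range n, (P.x (i + u) : ℤ) := by
    unfold blockSum; push_cast; rfl
  push_cast
  rw [this]
  ring

lemma addComplexity_eq (n : ℕ) : addComplexity P.x n = (P.Dset n).ncard := by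
  have hinj : Function.Injective (fun v : ℕ => (P.M : ℤ) * v - P.A * n) := by
    intro v w h
    simp only at h
    have hM : (0:ℤ) < (P.M : ℤ) := by
      have := P.two_le_M; exact_mod_cast (by omega : 0 < P.M)
    have : (v : ℤ) = w := by
      have h2 : (P.M : ℤ) * v = P.M * w := by linarith
      exact mul_left_cancel₀ (ne_of_gt hM) h2
    exact_mod_cast this
  have himg : P.Dset n
      = (fun v : ℕ => (P.M : ℤ) * v - P.A * n) '' {s : ℕ | ∃ i, blockSum P.x i n = s} := by
    ext d
    constructor
    · rintro ⟨i, rfl⟩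
      exact ⟨blockSum P.x i n, ⟨i, rfl⟩, (P.sZ_diff i n).symm⟩
    · rintro ⟨v, ⟨i, rfl⟩, hv⟩
      exact ⟨i, by rw [P.sZ_diff]; exact hv⟩
  rw [addComplexity, himg, Set.ncard_image_of_injective _ hinj]

lemma Dchar (n : ℕ) : P.Dset n =
    {d | ∃ b b' t t', b ∈ P.S ∧ b' ∈ P.S ∧ t < P.len b ∧ t' < P.len b' ∧
      P.Ofn b b' ((n : ℤ) + t - t') ∧ d = P.phi b' t' - P.phi b t} := by
  ext d
  constructor
  · rintro ⟨i, rfl⟩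
    obtain ⟨m, t, ht, hieq⟩ := P.cover_data i
    obtain ⟨m', t', ht', hieq'⟩ := P.cover_data (i + n)
    have hmm' : m ≤ m' := by
      by_contra hcon
      push_neg at hcon
      have h1 : P.L (m' + 1) ≤ P.L m := P.L_mono hcon
      have h2 := P.L_succ m'
      omega
    have hLmono : P.L m ≤ P.L m' := P.L_mono hmm'
    refine ⟨P.x m, P.x m', t, t', P.xS m, P.xS m', ht, ht',
      ⟨P.L m' - P.L m, by omega,
        ⟨m, m', hmm', rfl, rfl, by omega, by omega, by omega⟩⟩, ?_⟩
    rw [hieq, hieq'] at *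
    rw [P.sZ_block (le_of_lt ht'), P.sZ_block (le_of_lt ht)]
  · rintro ⟨b, b', t, t', hbS, hb'S, ht, ht',
      ⟨W, hWeq, ⟨m, m', hmm', hxb, hxb', hlb, hlb', hLW⟩⟩, rfl⟩
    refine ⟨P.L m + t, ?_⟩
    have htx : t < P.len (P.x m) := by rw [hxb]; exact ht
    have ht'x : t' < P.len (P.x m') := by rw [hxb']; exact ht'
    have hin : P.L m + t + n = P.L m' + t' := by omega
    rw [hin, P.sZ_block (le_of_lt ht'x), P.sZ_block (le_of_lt htx), hxb, hxb']

def R : ℕ := P.S.sup (fun b => (P.f b).length)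

lemma len_le_R {b : ℕ} (hb : b ∈ P.S) : P.len b ≤ P.R := Finset.le_sup hb

def C : ℕ := P.kk * P.R + P.kk

lemma R_le_C : P.R ≤ P.C := by
  have h2 := P.two_le_kk
  have : 2 * P.R ≤ P.kk * P.R := Nat.mul_le_mul_right P.R h2
  unfold C
  omega

lemma al_le_kkR {c τ : ℕ} (hc : c ∈ P.S) (hτ : τ ≤ P.len c) :
    P.al c τ ≤ P.kk * P.R :=
  le_trans (P.al_le hc hτ) (Nat.mul_le_mul_left P.kk (P.len_le_R hc))

/-- Transport of the occurrence window under n ↦ kk·n + r. -/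
lemma Ofn_transport {n n' : ℕ} (hn : P.C ≤ n) (hn' : P.C ≤ n')
    (hw : ∀ b ∈ P.S, ∀ b' ∈ P.S, ∀ e : ℤ, |e| ≤ (P.C : ℤ) →
      (P.Ofn b b' ((n : ℤ) + e) ↔ P.Ofn b b' ((n' : ℤ) + e)))
    {r : ℕ} (hr : r < P.kk) :
    ∀ b ∈ P.S, ∀ b' ∈ P.S, ∀ e : ℤ, |e| ≤ (P.C : ℤ) →
      P.Ofn b b' (((P.kk * n + r : ℕ) : ℤ) + e) →
        P.Ofn b b' (((P.kk * n' + r : ℕ) : ℤ) + e) := by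
  intro b hb b' hb' e he hOf
  obtain ⟨W, hW, hO⟩ := hOf
  rw [P.Orec] at hO
  obtain ⟨c, c', τ, τ', V, hc, hc', hτ, hτ', hgb, hgb', hlb, hlb', hOcc, hWeq⟩ := hO
  have hW' : (W : ℤ) = P.kk * n + r + e := by rw [hW]; push_cast; ring
  set ε : ℤ := (V : ℤ) - n with hε
  have hkε : (P.kk : ℤ) * ε = (r : ℤ) + e - ((P.al c' τ' : ℤ) - P.al c τ) := by
    rw [hε]
    linear_combination hW' - hWeq
  have hαb : P.al c τ ≤ P.kk * P.R := P.al_le_kkR hc (le_of_lt hτ)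
  have hαb' : P.al c' τ' ≤ P.kk * P.R := P.al_le_kkR hc' (le_of_lt hτ')
  have hK2 : (2 : ℤ) ≤ (P.kk : ℤ) := by exact_mod_cast P.two_le_kk
  have hCval : (P.C : ℤ) = (P.kk : ℤ) * P.R + P.kk := by
    unfold C; push_cast; ring
  have hεle : |ε| ≤ (P.C : ℤ) := by
    have he1 : -(P.C : ℤ) ≤ e := (abs_le.1 he).1
    have he2 : e ≤ (P.C : ℤ) := (abs_le.1 he).2
    have hr' : (r : ℤ) < P.kk := by exact_mod_cast hr
    have h0r : (0 : ℤ) ≤ r := by positivity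
    have hα1 : (0 : ℤ) ≤ (P.al c τ : ℤ) := by positivity
    have hα2 : (P.al c τ : ℤ) ≤ (P.kk : ℤ) * P.R := by exact_mod_cast hαb
    have hα3 : (0 : ℤ) ≤ (P.al c' τ' : ℤ) := by positivity
    have hα4 : (P.al c' τ' : ℤ) ≤ (P.kk : ℤ) * P.R := by exact_mod_cast hαb'
    have hR0 : (0 : ℤ) ≤ (P.R : ℤ) := by positivity
    have hkR0 : (0:ℤ) ≤ (P.kk:ℤ) * P.R := by positivity
    have hp1 : 2 * ((P.kk:ℤ) * P.R) ≤ (P.kk:ℤ) * ((P.kk:ℤ) * P.R) :=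
      mul_le_mul_of_nonneg_right hK2 hkR0
    have hp2 : 2 * (P.kk:ℤ) ≤ (P.kk:ℤ) * (P.kk:ℤ) :=
      mul_le_mul_of_nonneg_right hK2 (by linarith)
    have hexp : (P.kk:ℤ) * (P.C:ℤ) = (P.kk:ℤ) * ((P.kk:ℤ)*P.R) + (P.kk:ℤ)*(P.kk:ℤ) := by
      rw [hCval]; ring
    have hub : (P.kk:ℤ) * ε ≤ (P.kk:ℤ) * (P.C:ℤ) := by
      rw [hexp]
      linarith [hkε, hr', he2, hα3, hα2, hCval, hp1, hp2]
    have hlb : (P.kk:ℤ) * (-(P.C:ℤ)) ≤ (P.kk:ℤ) * ε := by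
      have : (P.kk:ℤ) * (-(P.C:ℤ)) = -((P.kk:ℤ) * ((P.kk:ℤ)*P.R) + (P.kk:ℤ)*(P.kk:ℤ)) := by
        rw [hCval]; ring
      rw [this]
      linarith [hkε, h0r, he1, hα1, hα4, hCval, hp1, hp2]
    have hkpos : (0:ℤ) < (P.kk:ℤ) := by linarith
    rw [abs_le]
    exact ⟨le_of_mul_le_mul_left hlb hkpos, le_of_mul_le_mul_left hub hkpos⟩
  have hOfnV : P.Ofn c c' ((n : ℤ) + ε) := ⟨V, by rw [hε]; ring, hOcc⟩
  obtain ⟨V', hV', hOcc'⟩ := (hw c hc c' hc' ε hεle).1 hOfnV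
  have hval : (P.kk : ℤ) * V' + P.al c' τ' - P.al c τ = ((P.kk * n' + r : ℕ) : ℤ) + e := by
    push_cast
    linear_combination (P.kk : ℤ) * hV' + hkε
  have hge : (0 : ℤ) ≤ ((P.kk * n' + r : ℕ) : ℤ) + e := by
    have he1 : -(P.C : ℤ) ≤ e := (abs_le.1 he).1
    have hn'' : (P.C : ℤ) ≤ (n' : ℤ) := by exact_mod_cast hn'
    have h0r : (0 : ℤ) ≤ (r : ℤ) := by positivity
    have h1n : (n' : ℤ) ≤ (P.kk:ℤ) * n' :=
      le_mul_of_one_le_left (by positivity) (by linarith)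
    push_cast
    linarith
  refine ⟨(((P.kk * n' + r : ℕ) : ℤ) + e).toNat, Int.toNat_of_nonneg hge, ?_⟩
  rw [P.Orec]
  exact ⟨c, c', τ, τ', V', hc, hc', hτ, hτ', hgb, hgb', hlb, hlb', hOcc',
    by rw [Int.toNat_of_nonneg hge, ← hval]⟩

/-- windows determine the D-sets -/
lemma D_det {n n' : ℕ} (hn : P.R ≤ n) (hn' : P.R ≤ n')
    (hw : ∀ b ∈ P.S, ∀ b' ∈ P.S, ∀ e : ℤ, |e| ≤ (P.C : ℤ) →
      (P.Ofn b b' ((n : ℤ) + e) ↔ P.Ofn b b' ((n' : ℤ) + e))) :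
    P.Dset n = P.Dset n' := by
  have key : ∀ (q q' : ℕ), P.R ≤ q → P.R ≤ q' →
      (∀ b ∈ P.S, ∀ b' ∈ P.S, ∀ e : ℤ, |e| ≤ (P.C : ℤ) →
        (P.Ofn b b' ((q : ℤ) + e) → P.Ofn b b' ((q' : ℤ) + e))) →
      P.Dset q ⊆ P.Dset q' := by
    intro q q' hq hq' hww d hd
    rw [P.Dchar] at hd ⊢
    obtain ⟨b, b', t, t', hbS, hb'S, ht, ht', hOf, hdval⟩ := hd
    refine ⟨b, b', t, t', hbS, hb'S, ht, ht', ?_, hdval⟩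
    have htR : t < P.R := lt_of_lt_of_le ht (P.len_le_R hbS)
    have ht'R : t' < P.R := lt_of_lt_of_le ht' (P.len_le_R hb'S)
    have hRC : P.R ≤ P.C := P.R_le_C
    have he : |(t : ℤ) - t'| ≤ (P.C : ℤ) := by
      rw [abs_le]
      constructor <;> [skip; skip] <;>
      · push_cast
        omega
    have := hww b hbS b' hb'S ((t : ℤ) - t') he
    rw [show (q : ℤ) + ((t : ℤ) - t') = (q : ℤ) + t - t' by ring,
        show (q' : ℤ) + ((t : ℤ) - t') = (q' : ℤ) + t - t' by ring] at this
    exact this hOf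
  apply Set.Subset.antisymm
  · exact key n n' hn hn' (fun b hb b' hb' e he => (hw b hb b' hb' e he).1)
  · exact key n' n hn' hn (fun b hb b' hb' e he => (hw b hb b' hb' e he).2)

open Classical in
noncomputable def st (n : ℕ) :
    Fin (P.C + 1) × ({b : ℕ // b ∈ P.S} → {b : ℕ // b ∈ P.S} → Fin (2 * P.C + 1) → Bool) :=
  (⟨min n P.C, by have := Nat.min_le_right n P.C; omega⟩,
   fun b b' d => decide (P.Ofn b.1 b'.1 ((n : ℤ) + d.1 - P.C)))

lemma st_cases {n n' : ℕ} (h : P.st n = P.st n') : n = n' ∨ (P.C ≤ n ∧ P.C ≤ n') := by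
  have h1 := congrArg (fun z => (Prod.fst z).val) h
  simp only [st] at h1
  rcases Nat.lt_or_ge n P.C with hn | hn <;> rcases Nat.lt_or_ge n' P.C with hn' | hn'
  · left; omega
  · left; omega
  · left; omega
  · right; exact ⟨hn, hn'⟩

lemma st_window {n n' : ℕ} (h : P.st n = P.st n') :
    ∀ b ∈ P.S, ∀ b' ∈ P.S, ∀ e : ℤ, |e| ≤ (P.C : ℤ) →
      (P.Ofn b b' ((n : ℤ) + e) ↔ P.Ofn b b' ((n' : ℤ) + e)) := by
  intro b hb b' hb' e he
  have h2 := congrArg Prod.snd h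
  simp only [st] at h2
  have he1 := (abs_le.1 he).1
  have he2 := (abs_le.1 he).2
  have hd : (e + P.C).toNat < 2 * P.C + 1 := by omega
  have h3 := congrFun (congrFun (congrFun h2 ⟨b, hb⟩) ⟨b', hb'⟩) ⟨(e + P.C).toNat, hd⟩
  simp only at h3
  have hiff := decide_eq_decide.1 h3
  have hcast : (((e + P.C).toNat : ℕ) : ℤ) = e + P.C := Int.toNat_of_nonneg (by omega)
  rw [show ((n : ℤ) + ((e + P.C).toNat : ℕ) - P.C) = (n : ℤ) + e by rw [hcast]; ring,
      show ((n' : ℤ) + ((e + P.C).toNat : ℕ) - P.C) = (n' : ℤ) + e by rw [hcast]; ring] at hiff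
  exact hiff

/-- the core determinism: states determine additive complexity -/
lemma addComplexity_det {n n' : ℕ} (h : P.st n = P.st n') :
    addComplexity P.x n = addComplexity P.x n' := by
  rcases P.st_cases h with rfl | ⟨hn, hn'⟩
  · rfl
  · have hw := P.st_window h
    have hRC := P.R_le_C
    rw [P.addComplexity_eq, P.addComplexity_eq,
      P.D_det (le_trans hRC hn) (le_trans hRC hn') hw]

/-- the core transition compatibility -/
lemma st_step {r : ℕ} (hr : r < P.kk) {n n' : ℕ} (h : P.st n = P.st n') :
    P.st (P.kk * n + r) = P.st (P.kk * n' + r) := by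
  rcases P.st_cases h with rfl | ⟨hn, hn'⟩
  · rfl
  · have hw := P.st_window h
    have hk2 := P.two_le_kk
    have hnn : n ≤ P.kk * n := Nat.le_mul_of_pos_left n (by omega)
    have hnn' : n' ≤ P.kk * n' := Nat.le_mul_of_pos_left n' (by omega)
    unfold st
    refine Prod.ext ?_ ?_
    · apply Fin.ext
      show min (P.kk * n + r) P.C = min (P.kk * n' + r) P.C
      have : P.C ≤ P.kk * n + r := by omega
      have : P.C ≤ P.kk * n' + r := by omega
      omega
    · funext b b' d
      simp only
      apply decide_eq_decide.2
      have hd := d.2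
      set e : ℤ := (d.1 : ℤ) - P.C with hedef
      have he : |e| ≤ (P.C : ℤ) := by
        rw [abs_le]
        constructor <;> [skip; skip] <;> omega
      have harg : ∀ q : ℕ, ((q : ℤ) + d.1 - P.C) = ((q : ℤ) + e) := by
        intro q; rw [hedef]; ring
      rw [show ((P.kk * n + r : ℕ) : ℤ) + (d.1 : ℤ) - P.C
            = ((P.kk * n + r : ℕ) : ℤ) + e by rw [hedef]; ring,
          show ((P.kk * n' + r : ℕ) : ℤ) + (d.1 : ℤ) - P.C
            = ((P.kk * n' + r : ℕ) : ℤ) + e by rw [hedef]; ring]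
      constructor
      · exact fun hof => P.Ofn_transport hn hn' hw hr b b.2 b' b'.2 e he hof
      · exact fun hof => P.Ofn_transport hn' hn
          (fun c hc c' hc' e' he' => (hw c hc c' hc' e' he').symm) hr b b.2 b' b'.2 e he hof

end PC

end AuxiliaryPC

/-- The additive complexity of the fixed point of a Parikh-collinear morphism is
k-automatic, where k = ∑_{b∈Σ} |f(b)|_b: its k-kernel is finite. -/
theorem parikh_collinear_additive_complexity_automatic
    (S : Finset ℕ) (f : ℕ → List ℕ)
    (hclosed : ∀ b ∈ S, ∀ c ∈ f b, c ∈ S)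
    (hcollinear : ∀ b ∈ S, ∀ b' ∈ S, ∃ p q : ℕ, ¬(p = 0 ∧ q = 0) ∧
      ∀ c ∈ S, p * (f b).count c = q * (f b').count c)
    (a : ℕ) (ha : a ∈ S)
    (hstart : (f a).head? = some a) (hlen : 2 ≤ (f a).length)
    (x : ℕ → ℕ) (hx : IsFixedPointOf f a x) :
    Set.Finite {g : ℕ → ℕ | ∃ e r : ℕ, r < (∑ b ∈ S, (f b).count b) ^ e ∧
      g = fun n => addComplexity x ((∑ b ∈ S, (f b).count b) ^ e * n + r)} := by
  rcases Nat.lt_or_ge (∑ b ∈ S, (f b).count b) 2 with hk1 | hk2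
  · -- degenerate case k ≤ 1 : the kernel is a subsingleton
    apply Set.Finite.subset (Set.finite_singleton (fun n => addComplexity x n))
    rintro g ⟨e, r, hr, rfl⟩
    have h2 : 0 < (∑ b ∈ S, (f b).count b) ^ e := by omega
    have hke : (∑ b ∈ S, (f b).count b) ^ e = 1 := by
      have h1 : (∑ b ∈ S, (f b).count b) ^ e ≤ 1 ^ e := Nat.pow_le_pow_left (by omega) e
      rw [one_pow] at h1
      omega
    have hr0 : r = 0 := by omega
    subst hr0
    simp only [Set.mem_singleton_iff, hke]
    funext n
    simp
  · -- main case
    set P : PC := ⟨S, f, a, x, hclosed, hcollinear, ha, hlen, hx.1, hx.2, hk2⟩ with hP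
    haveI : Fintype {b : ℕ // b ∈ P.S} := FinsetCoe.fintype P.S
    exact kernel_finite_of_state
      (F := Fin (P.C + 1) ×
        ({b : ℕ // b ∈ P.S} → {b : ℕ // b ∈ P.S} → Fin (2 * P.C + 1) → Bool))
      (∑ b ∈ S, (f b).count b) (by omega) P.st (addComplexity x)
      (fun n n' h => P.addComplexity_det h)
      (fun r hr n n' h => P.st_step hr h)
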